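/- Let U ⊂ ℝ² be open, let f : U → ℝ be C², and let γ : I → U be a differentiable curve on an interval I such that D²f(γ(t)) · γ'(t) = R · γ'(t) for all t ∈ I, where D²f denotes the Hessian matrix of f. Then the map t ↦ γ(t) + R·∇f(γ(t)) is constant on I. Similarly, if δ : I → U is a differentiable curve with D²f(δ(t)) · δ'(t) = −R · δ'(t) for all t, then t ↦ δ(t) − R·∇f(δ(t)) is constant on I. -/

import Mathlib

noncomputable section

/-- Counterclockwise rotation by 90 degrees: `R(x,y) = (−y, x)`. -/
def rot (X : ℝ × ℝ) : ℝ × ℝ := (-X.2, X.1)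

/-- Gradient of `f : ℝ² → ℝ`. -/
def grad (f : ℝ × ℝ → ℝ) (p : ℝ × ℝ) : ℝ × ℝ :=
  (fderiv ℝ f p (1, 0), fderiv ℝ f p (0, 1))

/-- The Hessian matrix of `f` at `p` applied to the vector `w`: `D²f(p)·w`. -/
def hessVec (f : ℝ × ℝ → ℝ) (p w : ℝ × ℝ) : ℝ × ℝ :=
  (fderiv ℝ (fderiv ℝ f) p (1, 0) w, fderiv ℝ (fderiv ℝ f) p (0, 1) w)

/-- `rot` as a continuous linear map. -/
def rotL : (ℝ × ℝ) →L[ℝ] (ℝ × ℝ) :=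
  (-(ContinuousLinearMap.snd ℝ ℝ ℝ)).prod (ContinuousLinearMap.fst ℝ ℝ ℝ)

lemma rotL_eq (X : ℝ × ℝ) : rotL X = rot X := rfl

lemma rot_smul (s : ℝ) (X : ℝ × ℝ) : rot (s • X) = s • rot X := by
  simp [rot, Prod.smul_def, mul_comm]

lemma rot_rot (X : ℝ × ℝ) : rot (rot X) = -X := by
  cases X; simp [rot, Prod.ext_iff]

/-- Key lemma: unified treatment of both signs. -/
lemma key (U : Set (ℝ × ℝ)) (hU : IsOpen U)
    (f : ℝ × ℝ → ℝ) (hf : ContDiffOn ℝ 2 f U)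
    (a b s : ℝ) (hs : s * s = 1) (γ : ℝ → ℝ × ℝ)
    (hγd : DifferentiableOn ℝ γ (Set.Ioo a b))
    (hγmem : ∀ t ∈ Set.Ioo a b, γ t ∈ U)
    (hγ : ∀ t ∈ Set.Ioo a b, hessVec f (γ t) (deriv γ t) = s • rot (deriv γ t)) :
    ∀ t₁ ∈ Set.Ioo a b, ∀ t₂ ∈ Set.Ioo a b,
      γ t₁ + s • rot (grad f (γ t₁)) = γ t₂ + s • rot (grad f (γ t₂)) := by
  intro t₁ ht₁ t₂ ht₂
  set g : ℝ → ℝ × ℝ := fun t => γ t + s • rot (grad f (γ t)) with hg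
  have hderiv : ∀ t ∈ Set.Ioo a b, HasDerivAt g 0 t := by
    intro t ht
    have hp : γ t ∈ U := hγmem t ht
    have hγt : HasDerivAt γ (deriv γ t) t := by
      have := (hγd t ht).differentiableAt (isOpen_Ioo.mem_nhds ht)
      exact this.hasDerivAt
    set v := deriv γ t
    have hf2 : ContDiffAt ℝ 2 f (γ t) := hf.contDiffAt (hU.mem_nhds hp)
    have hd2 : DifferentiableAt ℝ (fderiv ℝ f) (γ t) := by
      have : ContDiffAt ℝ 1 (fderiv ℝ f) (γ t) :=
        hf2.fderiv_right (m := 1) (by norm_num)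
      exact this.differentiableAt one_ne_zero
    set H := fderiv ℝ (fderiv ℝ f) (γ t) with hH
    have hsymm : ∀ w₁ w₂, H w₁ w₂ = H w₂ w₁ := by
      intro w₁ w₂
      apply second_derivative_symmetric_of_eventually (f := f) (f' := fderiv ℝ f)
        (x := γ t) ?_ hd2.hasFDerivAt
      filter_upwards [hU.mem_nhds hp] with y hy
      exact ((hf.contDiffAt (hU.mem_nhds hy)).differentiableAt two_ne_zero).hasFDerivAt
    have hfd : HasDerivAt (fun t => fderiv ℝ f (γ t)) (H v) t :=
      hd2.hasFDerivAt.comp_hasDerivAt t hγt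
    have h1 : HasDerivAt (fun t => fderiv ℝ f (γ t) (1, 0)) (H v (1, 0)) t :=
      ((ContinuousLinearMap.apply ℝ ℝ ((1 : ℝ), (0 : ℝ))).hasFDerivAt.comp_hasDerivAt t hfd)
    have h2 : HasDerivAt (fun t => fderiv ℝ f (γ t) (0, 1)) (H v (0, 1)) t :=
      ((ContinuousLinearMap.apply ℝ ℝ ((0 : ℝ), (1 : ℝ))).hasFDerivAt.comp_hasDerivAt t hfd)
    have hgrad : HasDerivAt (fun t => grad f (γ t)) (H v (1, 0), H v (0, 1)) t := h1.prodMk h2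
    have hessEq : (H v (1, 0), H v (0, 1)) = s • rot v := by
      rw [hsymm v (1, 0), hsymm v (0, 1)]
      exact hγ t ht
    rw [hessEq] at hgrad
    have hrg : HasDerivAt (fun t => s • rot (grad f (γ t))) (s • s • rot (rot v)) t := by
      have := (rotL.hasFDerivAt.comp_hasDerivAt t hgrad).const_smul s
      simpa [rotL_eq, rot_smul, Function.comp_def, Pi.smul_def] using this
    have := hγt.add hrg
    have hz : v + s • s • rot (rot v) = 0 := by
      rw [rot_rot, smul_neg, smul_neg, smul_smul, hs, one_smul]
      abel
    rw [hz] at this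
    exact this
  have hconv : Convex ℝ (Set.Ioo a b) := convex_Ioo a b
  apply hconv.is_const_of_fderivWithin_eq_zero (f := g)
    (fun t ht => ((hderiv t ht).differentiableAt.differentiableWithinAt))
    (fun t ht => ?_) ht₁ ht₂
  rw [fderivWithin_of_isOpen isOpen_Ioo ht]
  have h0 := (hderiv t ht).hasFDerivAt.fderiv
  rw [h0]
  exact ContinuousLinearMap.ext fun w => by simp

/-- Along a curve `γ` with `D²f(γ)·γ' = R·γ'` the map `t ↦ γ(t) + R∇f(γ(t))` is constant;
along a curve `δ` with `D²f(δ)·δ' = −R·δ'` the map `t ↦ δ(t) − R∇f(δ(t))` is constant. -/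
theorem statement6 (U : Set (ℝ × ℝ)) (hU : IsOpen U)
    (f : ℝ × ℝ → ℝ) (hf : ContDiffOn ℝ 2 f U)
    (a b : ℝ) (γ δ : ℝ → ℝ × ℝ)
    (hγd : DifferentiableOn ℝ γ (Set.Ioo a b))
    (hγmem : ∀ t ∈ Set.Ioo a b, γ t ∈ U)
    (hγ : ∀ t ∈ Set.Ioo a b, hessVec f (γ t) (deriv γ t) = rot (deriv γ t))
    (hδd : DifferentiableOn ℝ δ (Set.Ioo a b))
    (hδmem : ∀ t ∈ Set.Ioo a b, δ t ∈ U)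
    (hδ : ∀ t ∈ Set.Ioo a b, hessVec f (δ t) (deriv δ t) = -rot (deriv δ t)) :
    (∀ t₁ ∈ Set.Ioo a b, ∀ t₂ ∈ Set.Ioo a b,
      γ t₁ + rot (grad f (γ t₁)) = γ t₂ + rot (grad f (γ t₂))) ∧
    (∀ t₁ ∈ Set.Ioo a b, ∀ t₂ ∈ Set.Ioo a b,
      δ t₁ - rot (grad f (δ t₁)) = δ t₂ - rot (grad f (δ t₂))) := by
  constructor
  · have := key U hU f hf a b 1 (by norm_num) γ hγd hγmem
      (by intro t ht; simpa using hγ t ht)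
    simpa using this
  · have := key U hU f hf a b (-1) (by norm_num) δ hδd hδmem
      (by intro t ht; simpa using hδ t ht)
    intro t₁ ht₁ t₂ ht₂
    have h := this t₁ ht₁ t₂ ht₂
    simpa [sub_eq_add_neg, neg_one_smul] using h
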